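/- (Block Lemma) Let T be a measure-preserving transformation of a probability space and B a measurable set. Then for any positive integers R, L and p, ∫ |(1/R)∑_{i=0}^{R−1} χ_B∘T^{-i} − μ(B)| dμ ≤ ∫ |(1/L)∑_{i=0}^{L−1} χ_B∘T^{-ip} − μ(B)| dμ + pL/R. -/

import Mathlib

open MeasureTheory Filter Finset

private lemma sum_Ico_mem_bd (a : ℕ → ℝ) (h0 : ∀ k, 0 ≤ a k) (h1 : ∀ k, a k ≤ 1)
    (s t : ℕ) : 0 ≤ ∑ j ∈ Finset.Ico s t, a j ∧ ∑ j ∈ Finset.Ico s t, a j ≤ (t - s : ℕ) := by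
  constructor
  · exact Finset.sum_nonneg fun k _ => h0 k
  · calc ∑ j ∈ Finset.Ico s t, a j ≤ ∑ j ∈ Finset.Ico s t, (1:ℝ) :=
          Finset.sum_le_sum fun k _ => h1 k
      _ = ((t - s : ℕ) : ℝ) := by simp [Nat.card_Ico]

private lemma shift_bound (a : ℕ → ℝ) (h0 : ∀ k, 0 ≤ a k) (h1 : ∀ k, a k ≤ 1) (R m : ℕ) :
    |∑ j ∈ Finset.range R, a (m + j) - ∑ j ∈ Finset.range R, a j| ≤ (m : ℝ) := by
  have hre : ∑ j ∈ Finset.range R, a (m + j) = ∑ k ∈ Finset.Ico m (m + R), a k := by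
    rw [Finset.sum_Ico_eq_sum_range]
    simp
  rw [hre]
  rcases le_or_gt m R with hm | hm
  · have h1' : ∑ k ∈ Finset.Ico m (m + R), a k
        = ∑ k ∈ Finset.Ico m R, a k + ∑ k ∈ Finset.Ico R (m + R), a k :=
      (Finset.sum_Ico_consecutive _ hm (by omega)).symm
    have h2' : ∑ j ∈ Finset.range R, a j
        = ∑ k ∈ Finset.Ico 0 m, a k + ∑ k ∈ Finset.Ico m R, a k := by
      rw [Finset.range_eq_Ico]
      exact (Finset.sum_Ico_consecutive _ (Nat.zero_le m) hm).symm
    obtain ⟨p1, p2⟩ := sum_Ico_mem_bd a h0 h1 R (m + R)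
    obtain ⟨q1, q2⟩ := sum_Ico_mem_bd a h0 h1 0 m
    rw [h1', h2']
    have : (m + R - R : ℕ) = m := by omega
    rw [this] at p2
    simp only [Nat.sub_zero] at q2
    rw [abs_le]; constructor <;> linarith
  · obtain ⟨p1, p2⟩ := sum_Ico_mem_bd a h0 h1 m (m + R)
    obtain ⟨q1, q2⟩ := sum_Ico_mem_bd a h0 h1 0 R
    rw [Finset.range_eq_Ico]
    have hR' : (m + R - m : ℕ) = R := by omega
    rw [hR'] at p2
    simp only [Nat.sub_zero] at q2
    have hRm : (R : ℝ) ≤ m := by exact_mod_cast hm.le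
    rw [abs_le]; constructor <;> linarith

private lemma avg_bound (a : ℕ → ℝ) (h0 : ∀ k, 0 ≤ a k) (h1 : ∀ k, a k ≤ 1)
    (R L p : ℕ) (hR : 0 < R) (hL : 0 < L) :
    |(1 / (R : ℝ)) * ∑ k ∈ Finset.range R, a k
      - (1 / (R : ℝ)) * ∑ j ∈ Finset.range R,
          ((1 / (L : ℝ)) * ∑ i ∈ Finset.range L, a (i * p + j))|
      ≤ (p : ℝ) * L / R := by
  have hR0 : (R : ℝ) ≠ 0 := Nat.cast_ne_zero.mpr hR.ne'
  have hL0 : (L : ℝ) ≠ 0 := Nat.cast_ne_zero.mpr hL.ne'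
  have key : ∑ j ∈ Finset.range R, ((1 / (L : ℝ)) * ∑ i ∈ Finset.range L, a (i * p + j))
      = (1 / (L : ℝ)) * ∑ i ∈ Finset.range L, ∑ j ∈ Finset.range R, a (i * p + j) := by
    rw [← Finset.mul_sum, Finset.sum_comm]
  rw [key]
  have expand : (1 / (R : ℝ)) * ∑ k ∈ Finset.range R, a k
      - (1 / (R : ℝ)) * ((1 / (L : ℝ)) * ∑ i ∈ Finset.range L, ∑ j ∈ Finset.range R, a (i * p + j))
      = (1 / ((R : ℝ) * L)) * ∑ i ∈ Finset.range L,
          (∑ k ∈ Finset.range R, a k - ∑ j ∈ Finset.range R, a (i * p + j)) := by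
    rw [Finset.sum_sub_distrib, Finset.sum_const, Finset.card_range]
    field_simp
    ring
  rw [expand, abs_mul]
  have h1R : |1 / ((R : ℝ) * L)| = 1 / ((R : ℝ) * L) := by
    rw [abs_of_nonneg]; positivity
  rw [h1R]
  have hsum : |∑ i ∈ Finset.range L,
      (∑ k ∈ Finset.range R, a k - ∑ j ∈ Finset.range R, a (i * p + j))| ≤ (L : ℝ) * (L * p) := by
    calc |∑ i ∈ Finset.range L, (∑ k ∈ Finset.range R, a k - ∑ j ∈ Finset.range R, a (i * p + j))|
        ≤ ∑ i ∈ Finset.range L, |∑ k ∈ Finset.range R, a k - ∑ j ∈ Finset.range R, a (i * p + j)| :=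
          Finset.abs_sum_le_sum_abs _ _
      _ ≤ ∑ i ∈ Finset.range L, ((L : ℝ) * p) := by
          apply Finset.sum_le_sum
          intro i hi
          have := shift_bound a h0 h1 R (i * p)
          rw [abs_sub_comm] at this
          refine this.trans ?_
          have : ((i * p : ℕ) : ℝ) ≤ (L : ℝ) * p := by
            push_cast
            have : (i : ℝ) ≤ L := by
              exact_mod_cast (Finset.mem_range.mp hi).le
            nlinarith [Nat.cast_nonneg (α := ℝ) p]
          exact this
      _ = (L : ℝ) * (L * p) := by rw [Finset.sum_const, Finset.card_range]; ring
  calc 1 / ((R : ℝ) * L) * |∑ i ∈ Finset.range L,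
        (∑ k ∈ Finset.range R, a k - ∑ j ∈ Finset.range R, a (i * p + j))|
      ≤ 1 / ((R : ℝ) * L) * ((L : ℝ) * (L * p)) := by
        apply mul_le_mul_of_nonneg_left hsum
        positivity
    _ = (p : ℝ) * L / R := by field_simp

theorem block_lemma
    {X : Type*} [MeasurableSpace X] (μ : Measure X) [IsProbabilityMeasure μ]
    (T : X ≃ᵐ X) (hT : MeasurePreserving T μ μ)
    (B : Set X) (hB : MeasurableSet B)
    (R L p : ℕ) (hR : 0 < R) (hL : 0 < L) (hp : 0 < p) :
    (∫ x, |(1 / (R : ℝ)) * ∑ i ∈ Finset.range R,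
        B.indicator (fun _ => (1 : ℝ)) ((⇑T.symm)^[i] x) - (μ B).toReal| ∂μ) ≤
    (∫ x, |(1 / (L : ℝ)) * ∑ i ∈ Finset.range L,
        B.indicator (fun _ => (1 : ℝ)) ((⇑T.symm)^[i * p] x) - (μ B).toReal| ∂μ)
      + (p : ℝ) * L / R := by
  set c : ℝ := (μ B).toReal with hc
  set f : X → ℝ := B.indicator (fun _ => (1 : ℝ)) with hf
  have hfm : Measurable f := measurable_const.indicator hB
  have hfi : Integrable f μ := (integrable_const 1).indicator hB
  have hf0 : ∀ x, 0 ≤ f x := fun x => Set.indicator_nonneg (fun _ _ => zero_le_one) x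
  have hf1 : ∀ x, f x ≤ 1 := fun x => Set.indicator_le' (fun _ _ => le_refl 1)
    (fun _ _ => zero_le_one) x
  have hTs : MeasurePreserving (⇑T.symm) μ μ := hT.symm T
  have hiter : ∀ n, MeasurePreserving ((⇑T.symm)^[n]) μ μ := fun n => hTs.iterate n
  -- g k x = f (T.symm^[k] x)
  set g : ℕ → X → ℝ := fun k x => f ((⇑T.symm)^[k] x) with hg
  have hgm : ∀ k, Measurable (g k) := fun k => hfm.comp (hiter k).measurable
  have hgi : ∀ k, Integrable (g k) μ := by
    intro k
    have : Integrable f (Measure.map ((⇑T.symm)^[k]) μ) := by rw [(hiter k).map_eq]; exact hfi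
    exact this.comp_measurable (hiter k).measurable
  -- Dp y = (1/L) ∑_{i<L} g (i*p) y
  set Dp : X → ℝ := fun y => (1 / (L : ℝ)) * ∑ i ∈ Finset.range L, g (i * p) y with hDp
  have hDpm : Measurable Dp := (Finset.measurable_sum _ (fun i _ => hgm (i * p))).const_mul _
  have hDpi : Integrable Dp μ :=
    (integrable_finset_sum _ (fun i _ => hgi (i * p))).const_mul _
  -- the averaged function
  set avg : X → ℝ :=
    fun x => (1 / (R : ℝ)) * ∑ j ∈ Finset.range R, Dp ((⇑T.symm)^[j] x) with havg
  have hDpcomp : ∀ j x, Dp ((⇑T.symm)^[j] x)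
      = (1 / (L : ℝ)) * ∑ i ∈ Finset.range L, g (i * p + j) x := by
    intro j x
    simp only [hDp, hg]
    congr 1
    apply Finset.sum_congr rfl
    intro i _
    rw [Function.iterate_add_apply]
  have hDpcompi : ∀ j, Integrable (fun x => Dp ((⇑T.symm)^[j] x)) μ := by
    intro j
    have : Integrable Dp (Measure.map ((⇑T.symm)^[j]) μ) := by rw [(hiter j).map_eq]; exact hDpi
    exact this.comp_measurable (hiter j).measurable
  have havgi : Integrable avg μ :=
    (integrable_finset_sum _ (fun j _ => hDpcompi j)).const_mul _
  -- pointwise estimate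
  have hpt : ∀ x, |(1 / (R : ℝ)) * ∑ k ∈ Finset.range R, g k x - c|
      ≤ |avg x - c| + (p : ℝ) * L / R := by
    intro x
    have h1 := avg_bound (fun k => g k x) (fun k => hf0 _) (fun k => hf1 _) R L p hR hL
    have h2 : avg x = (1 / (R : ℝ)) * ∑ j ∈ Finset.range R,
        ((1 / (L : ℝ)) * ∑ i ∈ Finset.range L, g (i * p + j) x) := by
      simp only [havg]
      congr 1
      exact Finset.sum_congr rfl fun j _ => hDpcomp j x
    calc |(1 / (R : ℝ)) * ∑ k ∈ Finset.range R, g k x - c|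
        ≤ |avg x - c| + |(1 / (R : ℝ)) * ∑ k ∈ Finset.range R, g k x - avg x| := by
          have := abs_sub_le ((1 / (R : ℝ)) * ∑ k ∈ Finset.range R, g k x) (avg x) c
          linarith [abs_sub_comm ((1 / (R : ℝ)) * ∑ k ∈ Finset.range R, g k x) (avg x)]
      _ ≤ |avg x - c| + (p : ℝ) * L / R := by
          rw [h2] at *
          linarith [h1]
  -- integrability of the LHS integrand
  have hAi : Integrable (fun x => |(1 / (R : ℝ)) * ∑ k ∈ Finset.range R, g k x - c|) μ :=
    (((integrable_finset_sum _ (fun k _ => hgi k)).const_mul _).sub (integrable_const c)).abs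
  have havgci : Integrable (fun x => |avg x - c|) μ := (havgi.sub (integrable_const c)).abs
  -- step 1
  have step1 : (∫ x, |(1 / (R : ℝ)) * ∑ k ∈ Finset.range R, g k x - c| ∂μ)
      ≤ (∫ x, |avg x - c| ∂μ) + (p : ℝ) * L / R := by
    calc (∫ x, |(1 / (R : ℝ)) * ∑ k ∈ Finset.range R, g k x - c| ∂μ)
        ≤ ∫ x, (|avg x - c| + (p : ℝ) * L / R) ∂μ :=
          integral_mono hAi (havgci.add (integrable_const _)) hpt
      _ = (∫ x, |avg x - c| ∂μ) + (p : ℝ) * L / R := by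
          rw [integral_add havgci (integrable_const _), integral_const]
          simp
  -- step 2 : ∫ |avg - c| ≤ ∫ |Dp - c|
  have hGm : Measurable (fun y => |Dp y - c|) := (hDpm.sub measurable_const).abs
  have hchange : ∀ j, (∫ x, |Dp ((⇑T.symm)^[j] x) - c| ∂μ) = ∫ y, |Dp y - c| ∂μ := by
    intro j
    have := integral_map (hiter j).aemeasurable
      (f := fun y => |Dp y - c|) (hGm.aestronglyMeasurable)
    rw [← this, (hiter j).map_eq]
  have hpt2 : ∀ x, |avg x - c| ≤ (1 / (R : ℝ)) * ∑ j ∈ Finset.range R,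
      |Dp ((⇑T.symm)^[j] x) - c| := by
    intro x
    have hR0 : (R : ℝ) ≠ 0 := Nat.cast_ne_zero.mpr hR.ne'
    have hcc : c = (1 / (R : ℝ)) * ∑ _j ∈ Finset.range R, c := by
      rw [Finset.sum_const, Finset.card_range, nsmul_eq_mul]
      field_simp
    have : avg x - c = (1 / (R : ℝ)) * ∑ j ∈ Finset.range R,
        (Dp ((⇑T.symm)^[j] x) - c) := by
      rw [Finset.sum_sub_distrib, mul_sub]
      simp only [havg]
      rw [Finset.sum_const, Finset.card_range, nsmul_eq_mul]
      field_simp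
    rw [this, abs_mul, abs_of_nonneg (by positivity : (0:ℝ) ≤ 1 / (R:ℝ))]
    apply mul_le_mul_of_nonneg_left (Finset.abs_sum_le_sum_abs _ _)
    positivity
  have step2 : (∫ x, |avg x - c| ∂μ) ≤ ∫ y, |Dp y - c| ∂μ := by
    have hint : ∀ j, Integrable (fun x => |Dp ((⇑T.symm)^[j] x) - c|) μ :=
      fun j => ((hDpcompi j).sub (integrable_const c)).abs
    calc (∫ x, |avg x - c| ∂μ)
        ≤ ∫ x, (1 / (R : ℝ)) * ∑ j ∈ Finset.range R, |Dp ((⇑T.symm)^[j] x) - c| ∂μ :=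
          integral_mono havgci ((integrable_finset_sum _ (fun j _ => hint j)).const_mul _) hpt2
      _ = (1 / (R : ℝ)) * ∑ j ∈ Finset.range R, ∫ x, |Dp ((⇑T.symm)^[j] x) - c| ∂μ := by
          rw [integral_const_mul, integral_finset_sum _ (fun j _ => hint j)]
      _ = (1 / (R : ℝ)) * ∑ j ∈ Finset.range R, ∫ y, |Dp y - c| ∂μ := by
          congr 1
          exact Finset.sum_congr rfl fun j _ => hchange j
      _ = ∫ y, |Dp y - c| ∂μ := by
          rw [Finset.sum_const, Finset.card_range, nsmul_eq_mul]
          have hR0 : (R : ℝ) ≠ 0 := Nat.cast_ne_zero.mpr hR.ne'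
          field_simp
  -- conclude
  exact step1.trans (add_le_add_left step2 _)
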